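/- Let n be odd and G = D_n the dihedral group of order 2n. Then the only fixed point free abelian endomorphism of D_n is the trivial map. -/

import Mathlib

theorem dihedral_odd_fpf_trivial (n : ℕ) (hn : Odd n)
    (ψ : DihedralGroup n →* DihedralGroup n)
    (hfpf : ∀ g : DihedralGroup n, ψ g = g → g = 1)
    (hab : ∀ x y : DihedralGroup n, ψ x * ψ y = ψ y * ψ x) :
    ∀ g : DihedralGroup n, ψ g = 1 := by
  haveI : NeZero n := ⟨by rintro rfl; simp [Nat.odd_iff] at hn⟩
  -- y² = 1 where y = ψ(sr 0)
  have hy2 : ψ (.sr 0) * ψ (.sr 0) = 1 := by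
    rw [← map_mul, DihedralGroup.sr_mul_self, map_one]
  -- x = ψ(r 1) satisfies x = x⁻¹
  have hrel : (DihedralGroup.sr 0 : DihedralGroup n) * .r 1 * .sr 0 = (.r 1)⁻¹ := by
    rw [DihedralGroup.sr_mul_r, DihedralGroup.sr_mul_sr]
    refine eq_inv_of_mul_eq_one_left ?_
    rw [DihedralGroup.r_mul_r, show ((0:ZMod n) - (0 + 1) + 1 : ZMod n) = 0 by ring]
    exact DihedralGroup.one_def.symm
  have hx2 : ψ (.r 1) * ψ (.r 1) = 1 := by
    have h := congrArg ψ hrel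
    rw [map_mul, map_mul, map_inv, hab (.sr 0) (.r 1), mul_assoc, hy2, mul_one] at h
    rw [mul_eq_one_iff_eq_inv]
    exact h
  have hxn : ψ (.r 1) ^ n = 1 := by
    rw [← map_pow, DihedralGroup.r_one_pow_n, map_one]
  have hx1 : ψ (.r 1) = 1 := by
    obtain ⟨m, hm⟩ := hn
    calc ψ (.r 1) = (ψ (.r 1) * ψ (.r 1)) ^ m * ψ (.r 1) := by rw [hx2]; simp
    _ = ψ (.r 1) ^ n := by rw [← sq, ← pow_mul, ← pow_succ, ← hm]
    _ = 1 := hxn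
  have hr : ∀ i : ZMod n, ψ (.r i) = 1 := by
    intro i
    have : (DihedralGroup.r i : DihedralGroup n) = (.r 1) ^ i.val := by
      rw [DihedralGroup.r_one_pow, ZMod.natCast_val, ZMod.cast_id]
    rw [this, map_pow, hx1, one_pow]
  have hsr : ∀ i : ZMod n, ψ (.sr i) = ψ (.sr 0) := by
    intro i
    have : (DihedralGroup.sr i : DihedralGroup n) = .sr 0 * .r i := by
      rw [DihedralGroup.sr_mul_r, zero_add]
    rw [this, map_mul, hr, mul_one]
  have hy1 : ψ (.sr 0) = 1 := by
    rcases h : ψ (.sr 0) with a | a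
    · -- r a: from hy2, 2a = 0, so a = 0
      rw [h, DihedralGroup.r_mul_r, DihedralGroup.one_def] at hy2
      have ha : a + a = 0 := by injection hy2
      have h2 : (2 : ZMod n) * a = 0 := by rw [two_mul]; exact ha
      have hu : IsUnit (2 : ZMod n) := by
        have : ((2 : ℕ) : ZMod n) = 2 := by norm_cast
        rw [← this, ZMod.isUnit_iff_coprime, Nat.Prime.coprime_iff_not_dvd Nat.prime_two]
        exact fun hd => (Nat.not_even_iff_odd.mpr hn) (even_iff_two_dvd.mpr hd)
      have : a = 0 := by rwa [hu.mul_right_eq_zero] at h2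
      rw [this, ← DihedralGroup.one_def]
    · -- sr a: fixed point
      have : ψ (.sr a) = .sr a := by rw [hsr, h]
      have := hfpf _ this
      rw [DihedralGroup.one_def] at this
      exact absurd this (by intro h; cases h)
  intro g
  cases g with
  | r i => exact hr i
  | sr i => rw [hsr, hy1]
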